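/- Let N ≥ 1, let Ω be an open subset of ℝ^N, let r ≥ 1 and let p ∈ [1, r]. Suppose (u_n) is a sequence in L^r(Ω) that converges weakly in L^r(Ω) to some u ∈ L^r(Ω) (i.e. ∫_Ω u_n g dx → ∫_Ω u g dx for every g in the conjugate Lebesgue space L^{r'}(Ω)) and that u_n → u almost everywhere in Ω. Then |u_n|^p − |u_n − u|^p − |u|^p → 0 strongly in L^{r/p}(Ω), i.e. ∫_Ω ||u_n|^p − |u_n − u|^p − |u|^p|^{r/p} dx → 0 as n → ∞. -/

import Mathlib

open MeasureTheory Filter Real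
open scoped ENNReal
lemma bl_mvt {p : ℝ} (hp : 1 ≤ p) {x y : ℝ} (hy : 0 ≤ y) (hxy : y ≤ x) :
    x ^ p - y ^ p ≤ p * x ^ (p - 1) * (x - y) := by
  rcases eq_or_lt_of_le hxy with h | h
  · simp [h]
  have hx : 0 ≤ x := hy.trans hxy
  have hdiff : ∀ t : ℝ, HasDerivAt (fun s => s ^ p) (p * t ^ (p - 1)) t :=
    fun t => Real.hasDerivAt_rpow_const (Or.inr hp)
  obtain ⟨c, hc, hc'⟩ := exists_hasDerivAt_eq_slope (fun s => s ^ p) (fun t => p * t ^ (p - 1)) h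
    (fun t _ => (hdiff t).continuousAt.continuousWithinAt) (fun t _ => hdiff t)
  have hcx : c ≤ x := le_of_lt hc.2
  have hc0 : 0 ≤ c := hy.trans hc.1.le
  have heq : (x ^ p - y ^ p) = p * c ^ (p - 1) * (x - y) := by
    rw [hc', div_mul_cancel₀]
    exact sub_ne_zero.mpr h.ne'
  rw [heq]
  have : c ^ (p - 1) ≤ x ^ (p - 1) := Real.rpow_le_rpow hc0 hcx (by linarith)
  have hp0 : (0:ℝ) ≤ p := by linarith
  have hxy0 : (0:ℝ) ≤ x - y := by linarith
  have := mul_le_mul_of_nonneg_left this hp0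
  have := mul_le_mul_of_nonneg_right this hxy0
  linarith


lemma bl_abs_rpow_sub {p : ℝ} (hp : 1 ≤ p) {x y : ℝ} (hx : 0 ≤ x) (hy : 0 ≤ y) :
    |x ^ p - y ^ p| ≤ p * (max x y) ^ (p - 1) * |x - y| := by
  rcases le_total y x with h | h
  · rw [abs_of_nonneg (by linarith [Real.rpow_le_rpow hy h (by linarith : (0:ℝ) ≤ p)] :
        (0:ℝ) ≤ x ^ p - y ^ p), abs_of_nonneg (by linarith), max_eq_left h]
    exact bl_mvt hp hy h
  · rw [abs_sub_comm, abs_sub_comm x y,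
      abs_of_nonneg (by linarith [Real.rpow_le_rpow hx h (by linarith : (0:ℝ) ≤ p)] :
        (0:ℝ) ≤ y ^ p - x ^ p), abs_of_nonneg (by linarith), max_eq_right h]
    exact bl_mvt hp hx h

lemma bl_two_rpow {p : ℝ} (hp : 0 ≤ p) {s t : ℝ} (hs : 0 ≤ s) (ht : 0 ≤ t) :
    (s + t) ^ p ≤ 2 ^ p * (s ^ p + t ^ p) := by
  have h1 : s + t ≤ 2 * max s t := by rcases le_total s t with h|h <;> simp [max_eq_right, max_eq_left, h] <;> linarith
  calc (s + t) ^ p ≤ (2 * max s t) ^ p :=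
        Real.rpow_le_rpow (by linarith) h1 hp
    _ = 2 ^ p * (max s t) ^ p := Real.mul_rpow (by norm_num) (le_max_of_le_left hs)
    _ ≤ 2 ^ p * (s ^ p + t ^ p) := by
        gcongr
        rcases le_total s t with h|h
        · rw [max_eq_right h]; nlinarith [Real.rpow_nonneg hs p]
        · rw [max_eq_left h]; nlinarith [Real.rpow_nonneg ht p]

/-- Step A: the ε–C inequality. -/
lemma bl_eps_ineq {p : ℝ} (hp : 1 ≤ p) {ε : ℝ} (hε : 0 < ε) :
    ∃ C > 0, ∀ a b : ℝ, abs (|a| ^ p - |a - b| ^ p) ≤ ε * |a - b| ^ p + C * |b| ^ p := by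
  rcases eq_or_lt_of_le hp with h1 | h1
  · refine ⟨1, one_pos, fun a b => ?_⟩
    rw [← h1]
    simp only [Real.rpow_one]
    have := abs_abs_sub_abs_le_abs_sub a (a - b)
    simp only [sub_sub_cancel] at this
    nlinarith [abs_nonneg (a - b), abs_nonneg b]
  -- p > 1
  have hp0 : 0 < p := by linarith
  set K : ℝ := p * 2 ^ (p - 1) with hK
  have hKpos : 0 < K := by rw [hK]; positivity
  have hpq : Real.HolderConjugate (p / (p - 1)) p := (Real.holderConjugate_iff_eq_conjExponent h1).mpr rfl |>.symm
  set p' : ℝ := p / (p - 1) with hp'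
  have hp'pos : 0 < p' := hpq.pos
  -- choose θ with K * θ^p' / p' ≤ ε
  set θ : ℝ := (ε * p' / K) ^ (1 / p') with hθ
  have hθpos : 0 < θ := by rw [hθ]; positivity
  set C : ℝ := K * (θ⁻¹ ^ p / p + 1) with hC
  have hCpos : 0 < C := by rw [hC]; positivity
  refine ⟨C, hCpos, fun a b => ?_⟩
  have h2 := bl_abs_rpow_sub hp (abs_nonneg a) (abs_nonneg (a - b))
  set A : ℝ := |a - b| with hA'
  set B : ℝ := |b| with hB'
  have hA : 0 ≤ A := abs_nonneg _
  have hB : 0 ≤ B := abs_nonneg _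
  have hp1 : (0:ℝ) ≤ p - 1 := by linarith
  have h3 : max |a| A ≤ A + B := by
    refine max_le ?_ (by linarith)
    calc |a| = |(a - b) + b| := by ring_nf
      _ ≤ A + B := abs_add_le _ _
  have h4 : abs (|a| - A) ≤ B := by
    have := abs_abs_sub_abs_le_abs_sub a (a - b)
    simpa using this
  have h5 : B ^ (p - 1) * B = B ^ p := by
    have h := Real.rpow_add' hB (show p - 1 + 1 ≠ 0 by rw [sub_add_cancel]; exact hp0.ne')
    simpa [Real.rpow_one, show p - 1 + 1 = p by ring] using h.symm
  have hchain : abs (|a| ^ p - A ^ p) ≤ K * (A ^ (p-1) * B) + K * B ^ p := by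
    have m1 : (max |a| A) ^ (p - 1) ≤ (A + B) ^ (p - 1) :=
      Real.rpow_le_rpow (le_max_of_le_left (abs_nonneg a)) h3 hp1
    have m2 : (A + B) ^ (p - 1) ≤ 2 ^ (p - 1) * (A ^ (p-1) + B ^ (p-1)) :=
      bl_two_rpow hp1 hA hB
    calc abs (|a| ^ p - A ^ p) ≤ p * (max |a| A) ^ (p - 1) * abs (|a| - A) := h2
      _ ≤ p * (2 ^ (p - 1) * (A ^ (p-1) + B ^ (p-1))) * B := by
          have hm := m1.trans m2
          have hc0 : 0 ≤ 2 ^ (p - 1) * (A ^ (p-1) + B ^ (p-1)) :=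
            mul_nonneg (Real.rpow_nonneg (by norm_num) _)
              (add_nonneg (Real.rpow_nonneg hA _) (Real.rpow_nonneg hB _))
          exact mul_le_mul (mul_le_mul_of_nonneg_left hm hp0.le) h4 (abs_nonneg _)
            (mul_nonneg hp0.le hc0)
      _ = K * (A ^ (p-1) * B) + K * (B ^ (p-1) * B) := by rw [hK]; ring
      _ = K * (A ^ (p-1) * B) + K * B ^ p := by rw [h5]
  -- Young's inequality
  have hyoung : A ^ (p-1) * B ≤ θ ^ p' * A ^ p / p' + θ⁻¹ ^ p * B ^ p / p := by
    have hy := Real.young_inequality_of_nonneg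
      (mul_nonneg hθpos.le (Real.rpow_nonneg hA (p-1)))
      (mul_nonneg (inv_nonneg.mpr hθpos.le) hB) hpq
    have e1 : θ * A ^ (p-1) * (θ⁻¹ * B) = A ^ (p-1) * B := by
      field_simp
    have hpm1 : p - 1 ≠ 0 := by linarith
    have e2 : (θ * A ^ (p-1)) ^ p' = θ ^ p' * A ^ p := by
      rw [Real.mul_rpow hθpos.le (Real.rpow_nonneg hA _), ← Real.rpow_mul hA]
      congr 1
      rw [hp']
      field_simp
    have e3 : (θ⁻¹ * B) ^ p = θ⁻¹ ^ p * B ^ p :=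
      Real.mul_rpow (inv_nonneg.mpr hθpos.le) hB
    rw [e1, e2, e3] at hy
    exact hy
  have hθp' : θ ^ p' = ε * p' / K := by
    rw [hθ, ← Real.rpow_mul (div_nonneg (mul_nonneg hε.le hp'pos.le) hKpos.le),
      one_div, inv_mul_cancel₀ (ne_of_gt hp'pos), Real.rpow_one]
  calc abs (|a| ^ p - A ^ p) ≤ K * (A ^ (p-1) * B) + K * B ^ p := hchain
    _ ≤ K * (θ ^ p' * A ^ p / p' + θ⁻¹ ^ p * B ^ p / p) + K * B ^ p := by
        gcongr
    _ = ε * A ^ p + C * B ^ p := by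
        rw [hθp', hC]
        field_simp
        ring


lemma bl_measurable_sign : Measurable Real.sign := by
  unfold Real.sign
  refine Measurable.ite (measurableSet_lt measurable_id measurable_const) measurable_const ?_
  exact Measurable.ite (measurableSet_lt measurable_const measurable_id) measurable_const
    measurable_const

lemma bl_abs_sign (t : ℝ) : |Real.sign t| ≤ 1 := by
  rcases Real.sign_apply_eq t with h | h | h <;> rw [h] <;> norm_num

lemma bl_mul_sign {r : ℝ} (hr : 1 ≤ r) (t : ℝ) :
    t * (Real.sign t * |t| ^ (r - 1)) = |t| ^ r := by
  have hr0 : r ≠ 0 := by linarith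
  rcases lt_trichotomy t 0 with h | h | h
  · rw [Real.sign_of_neg h, abs_of_neg h,
      show r = (r-1) + 1 by ring, Real.rpow_add' (by linarith) (by simpa using hr0)]
    ring_nf; rw [Real.rpow_one]; ring
  · simp [h, Real.zero_rpow hr0]
  · rw [Real.sign_of_pos h, abs_of_pos h,
      show r = (r-1) + 1 by ring, Real.rpow_add' (by linarith) (by simpa using hr0)]
    ring_nf; rw [Real.rpow_one]; ring

lemma bl_abs_sign_mul {s t : ℝ} (hs : 0 < s) :
    |Real.sign t * |t| ^ s| = |t| ^ s := by
  rcases lt_trichotomy t 0 with h | h | h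
  · rw [Real.sign_of_neg h, abs_mul, abs_neg, abs_one, one_mul,
      abs_of_nonneg (Real.rpow_nonneg (abs_nonneg t) s)]
  · simp [h, Real.zero_rpow hs.ne']
  · rw [Real.sign_of_pos h, one_mul, abs_of_nonneg (Real.rpow_nonneg (abs_nonneg t) s)]

/-- Uniform bound on `∫ |u n|^r` from pointwise boundedness of the pairings. -/
lemma bl_sup_bound {α : Type*} [MeasurableSpace α] {μ : Measure α} {r : ℝ} (hr : 1 ≤ r)
    {r' : ℝ≥0∞} (hr' : 1 / ENNReal.ofReal r + 1 / r' = 1)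
    {u : ℕ → α → ℝ} (hu : ∀ n, MemLp (u n) (ENNReal.ofReal r) μ)
    (hbdd : ∀ g : α → ℝ, MemLp g r' μ → ∃ C, ∀ n, ‖∫ x, u n x * g x ∂μ‖ ≤ C) :
    ∃ M, ∀ n, ∫ x, |u n x| ^ r ∂μ ≤ M := by
  have hr0 : (0:ℝ) < r := lt_of_lt_of_le one_pos hr
  rw [one_div, one_div] at hr'
  have hrne : ENNReal.ofReal r ≠ 0 := by simp [hr0]
  have hrinvtop : (ENNReal.ofReal r)⁻¹ ≠ ∞ := ENNReal.inv_ne_top.mpr hrne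
  have hr'1 : 1 ≤ r' := by
    rw [← ENNReal.inv_le_one, ← hr']
    exact le_add_self
  haveI : Fact (1 ≤ r') := ⟨hr'1⟩
  have hconj : (1:ℝ≥0∞)/1 = 1/r' + 1/(ENNReal.ofReal r) := by
    rw [div_one, one_div, one_div, ← hr', add_comm]
  -- integrability of pairings
  have hint : ∀ (g : α → ℝ), MemLp g r' μ → ∀ n, Integrable (fun x => u n x * g x) μ := by
    intro g hg n
    have h := memLp_one_iff_integrable.mp ((hu n).smul hg (hpqr := ⟨by have h := hconj; rw [div_one, one_div, one_div] at h; rw [inv_one]; exact h.symm⟩))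
    have e : (fun x => u n x * g x) = fun x => (g • u n) x := by
      funext x; simp [mul_comm]
    rw [e]; exact h
  -- Hölder bound
  have hHolder : ∀ (n : ℕ) (g : α → ℝ), MemLp g r' μ →
      ‖∫ x, u n x * g x ∂μ‖ ≤
        (eLpNorm (u n) (ENNReal.ofReal r) μ).toReal * (eLpNorm g r' μ).toReal := by
    intro n g hg
    have hint' := hint g hg n
    have h1 : ‖∫ x, u n x * g x ∂μ‖ ≤ ∫ x, ‖u n x * g x‖ ∂μ := norm_integral_le_integral_norm _
    have h2 : ∫ x, ‖u n x * g x‖ ∂μ = (eLpNorm (fun x => u n x * g x) 1 μ).toReal := by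
      rw [integral_norm_eq_lintegral_enorm hint'.1, eLpNorm_one_eq_lintegral_enorm]
    have h3 : eLpNorm (fun x => u n x * g x) 1 μ ≤
        eLpNorm g r' μ * eLpNorm (u n) (ENNReal.ofReal r) μ := by
      have h := eLpNorm_smul_le_mul_eLpNorm (p := r') (q := ENNReal.ofReal r) (r := 1) (hu n).1 hg.1 (hpqr := ⟨by have h := hconj; rw [div_one, one_div, one_div] at h; rw [inv_one]; exact h.symm⟩)
      have e : (fun x => u n x * g x) = g • u n := by funext x; simp [mul_comm]
      rw [e]; exact h
    have h4 : (eLpNorm (fun x => u n x * g x) 1 μ).toReal ≤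
        (eLpNorm g r' μ * eLpNorm (u n) (ENNReal.ofReal r) μ).toReal :=
      ENNReal.toReal_mono (ENNReal.mul_ne_top hg.eLpNorm_ne_top (hu n).eLpNorm_ne_top) h3
    rw [ENNReal.toReal_mul] at h4
    calc ‖∫ x, u n x * g x ∂μ‖ ≤ ∫ x, ‖u n x * g x‖ ∂μ := h1
      _ = (eLpNorm (fun x => u n x * g x) 1 μ).toReal := h2
      _ ≤ (eLpNorm g r' μ).toReal * (eLpNorm (u n) (ENNReal.ofReal r) μ).toReal := h4
      _ = _ := mul_comm _ _
  -- the continuous linear maps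
  let T : ℕ → (Lp ℝ r' μ →L[ℝ] ℝ) := fun n =>
    LinearMap.mkContinuous
      { toFun := fun g => ∫ x, u n x * (g : α → ℝ) x ∂μ
        map_add' := fun g h => by
          have e : (fun x => u n x * (⇑(g + h)) x) =ᵐ[μ]
              fun x => u n x * g x + u n x * h x := by
            filter_upwards [Lp.coeFn_add g h] with x hx
            rw [hx]; simp only [Pi.add_apply]; ring
          rw [integral_congr_ae e,
            integral_add (hint _ (Lp.memLp g) n) (hint _ (Lp.memLp h) n)]
        map_smul' := fun c g => by
          have e : (fun x => u n x * (⇑(c • g)) x) =ᵐ[μ] fun x => c * (u n x * g x) := by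
            filter_upwards [Lp.coeFn_smul c g] with x hx
            rw [hx]; simp only [Pi.smul_apply, smul_eq_mul]; ring
          simp only [RingHom.id_apply, smul_eq_mul]
          rw [integral_congr_ae e, integral_const_mul] }
      ((eLpNorm (u n) (ENNReal.ofReal r) μ).toReal)
      (fun g => by
        simpa only [Lp.norm_def, LinearMap.coe_mk, AddHom.coe_mk] using hHolder n (⇑g) (Lp.memLp g))
  have hTapp : ∀ (n : ℕ) (g : Lp ℝ r' μ), T n g = ∫ x, u n x * (g : α → ℝ) x ∂μ :=
    fun n g => rfl
  have hptb : ∀ g : Lp ℝ r' μ, ∃ C, ∀ n, ‖T n g‖ ≤ C := by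
    intro g
    obtain ⟨C, hC⟩ := hbdd (⇑g) (Lp.memLp g)
    exact ⟨C, fun n => by rw [hTapp]; exact hC n⟩
  obtain ⟨C', hC'⟩ := banach_steinhaus hptb
  have hC'0 : 0 ≤ C' := le_trans (norm_nonneg (T 0)) (hC' 0)
  set a : ℕ → ℝ := fun n => ∫ x, |u n x| ^ r ∂μ with ha
  have ha0 : ∀ n, 0 ≤ a n := fun n => integral_nonneg fun x => Real.rpow_nonneg (abs_nonneg _) _
  rcases eq_or_lt_of_le hr with hreq | hrlt
  · -- r = 1, r' = ∞
    subst hreq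
    have hr'top : r' = ∞ := by
      rw [ENNReal.ofReal_one, inv_one] at hr'
      have h0 : r'⁻¹ = 0 := by
        have := hr'
        nth_rewrite 2 [show (1:ℝ≥0∞) = 1 + 0 by simp] at this
        exact (ENNReal.add_right_inj (by simp)).mp this
      exact ENNReal.inv_eq_zero.mp h0
    refine ⟨C', fun n => ?_⟩
    set g : α → ℝ := fun x => Real.sign (u n x) with hgdef
    have hgm : AEStronglyMeasurable g μ :=
      (bl_measurable_sign.comp_aemeasurable (hu n).1.aemeasurable).aestronglyMeasurable
    have hg : MemLp g r' μ := by
      rw [hr'top]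
      exact memLp_top_of_bound hgm 1 (Eventually.of_forall fun x =>
        (show |Real.sign (u n x)| ≤ 1 from bl_abs_sign (u n x)))
    set G := hg.toLp g with hG
    have hnormG : ‖G‖ ≤ 1 := by
      rw [hG, Lp.norm_toLp, hr'top]
      have h : eLpNormEssSup g μ ≤ ENNReal.ofReal 1 :=
        eLpNormEssSup_le_of_ae_bound (Eventually.of_forall fun x =>
          (show |Real.sign (u n x)| ≤ 1 from bl_abs_sign (u n x)))
      rw [eLpNorm_exponent_top]
      calc (eLpNormEssSup g μ).toReal ≤ (ENNReal.ofReal 1).toReal :=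
            ENNReal.toReal_mono ENNReal.ofReal_ne_top h
        _ = 1 := by simp
    have hTG : T n G = a n := by
      rw [hTapp, ha]
      refine integral_congr_ae ?_
      filter_upwards [hg.coeFn_toLp] with x hx
      rw [hx, hgdef]
      have := bl_mul_sign le_rfl (u n x)
      simpa [Real.rpow_one] using this
    calc a n = T n G := hTG.symm
      _ ≤ ‖T n G‖ := le_abs_self _
      _ ≤ ‖T n‖ * ‖G‖ := ContinuousLinearMap.le_opNorm _ _
      _ ≤ C' * 1 := mul_le_mul (hC' n) hnormG (norm_nonneg _) hC'0
      _ = C' := mul_one _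
  · -- 1 < r
    have hr1pos : (0:ℝ) < r - 1 := by linarith
    set s : ℝ := r / (r - 1) with hs
    have hspos : 0 < s := by positivity
    have hr'val : r' = ENNReal.ofReal s := by
      have h1 : r'⁻¹ = 1 - (ENNReal.ofReal r)⁻¹ := by
        rw [← hr', ENNReal.add_sub_cancel_left hrinvtop]
      have h2 : (ENNReal.ofReal r)⁻¹ = ENNReal.ofReal (1/r) := by
        rw [one_div, ENNReal.ofReal_inv_of_pos hr0]
      have h3 : r'⁻¹ = ENNReal.ofReal (1 - 1/r) := by
        rw [h1, h2, ENNReal.ofReal_sub _ (by positivity), ENNReal.ofReal_one]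
      have h4 : (1:ℝ) - 1/r = s⁻¹ := by
        rw [hs]; field_simp
      rw [← inv_inv r', h3, h4, ← ENNReal.ofReal_inv_of_pos (by positivity), inv_inv]
    have hr'ne : r' ≠ 0 := by
      rw [hr'val]; simp [hspos]
    have hr'top : r' ≠ ∞ := by rw [hr'val]; exact ENNReal.ofReal_ne_top
    have hr'toReal : r'.toReal = s := by rw [hr'val, ENNReal.toReal_ofReal hspos.le]
    refine ⟨max 1 (C' ^ r), fun n => ?_⟩
    set g : α → ℝ := fun x => Real.sign (u n x) * |u n x| ^ (r - 1) with hgdef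
    have habsg : ∀ x, |g x| = |u n x| ^ (r - 1) := fun x => bl_abs_sign_mul hr1pos
    -- membership
    have hbase : MemLp (fun x => ‖u n x‖ ^ (ENNReal.ofReal (r-1)).toReal)
        (ENNReal.ofReal r / ENNReal.ofReal (r-1)) μ :=
      (hu n).norm_rpow_div (ENNReal.ofReal (r-1))
    have hexp : ENNReal.ofReal r / ENNReal.ofReal (r-1) = r' := by
      rw [hr'val, hs, ENNReal.ofReal_div_of_pos hr1pos]
    have hbase' : MemLp (fun x => |u n x| ^ (r-1)) r' μ := by
      rw [← hexp]
      have : (fun x => |u n x| ^ (r-1)) =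
          fun x => ‖u n x‖ ^ (ENNReal.ofReal (r-1)).toReal := by
        funext x; rw [Real.norm_eq_abs, ENNReal.toReal_ofReal hr1pos.le]
      rw [this]; exact hbase
    have hgm : AEStronglyMeasurable g μ := by
      have h1 : AEMeasurable (fun x => Real.sign (u n x)) μ :=
        bl_measurable_sign.comp_aemeasurable (hu n).1.aemeasurable
      have h2 : AEMeasurable (fun x => |u n x| ^ (r-1)) μ := by
        have := (hu n).1.aemeasurable
        fun_prop
      exact (h1.mul h2).aestronglyMeasurable
    have hg : MemLp g r' μ :=
      hbase'.of_le hgm (Eventually.of_forall fun x => by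
        rw [Real.norm_eq_abs, habsg x, Real.norm_eq_abs,
          abs_of_nonneg (Real.rpow_nonneg (abs_nonneg _) _)])
    set G := hg.toLp g with hG
    -- compute the norm of G
    have hintG : ∫ x, ‖g x‖ ^ s ∂μ = a n := by
      rw [ha]
      refine integral_congr_ae (Eventually.of_forall fun x => ?_)
      show ‖g x‖ ^ s = |u n x| ^ r
      rw [Real.norm_eq_abs, habsg x, ← Real.rpow_mul (abs_nonneg _)]
      have hrs : (r - 1) * s = r := by
        rw [hs]; field_simp
      rw [hrs]
    have hnormG : ‖G‖ = a n ^ s⁻¹ := by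
      rw [hG, Lp.norm_toLp, hg.eLpNorm_eq_integral_rpow_norm hr'ne hr'top, hr'toReal, hintG,
        ENNReal.toReal_ofReal (Real.rpow_nonneg (ha0 n) _)]
    have hTG : T n G = a n := by
      rw [hTapp, ha]
      refine integral_congr_ae ?_
      filter_upwards [hg.coeFn_toLp] with x hx
      rw [hx, hgdef]
      exact bl_mul_sign hr (u n x)
    have hkey : a n ≤ C' * a n ^ s⁻¹ := by
      calc a n = T n G := hTG.symm
        _ ≤ ‖T n G‖ := le_abs_self _
        _ ≤ ‖T n‖ * ‖G‖ := ContinuousLinearMap.le_opNorm _ _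
        _ ≤ C' * (a n ^ s⁻¹) := by
            rw [hnormG]
            exact mul_le_mul_of_nonneg_right (hC' n) (Real.rpow_nonneg (ha0 n) _)
    rcases le_or_gt (a n) 1 with h1 | h1
    · exact le_max_of_le_left h1
    · refine le_max_of_le_right ?_
      have hapos : 0 < a n := lt_trans one_pos h1
      have hsum : s⁻¹ + 1/r = 1 := by
        rw [hs]; field_simp; ring
      have hsplit : a n = a n ^ s⁻¹ * a n ^ (1/r) := by
        rw [← Real.rpow_add hapos, hsum, Real.rpow_one]
      have hspow : 0 < a n ^ s⁻¹ := Real.rpow_pos_of_pos hapos _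
      have h5 : a n ^ (1/r) ≤ C' := by
        have h6 : a n ^ (1/r) * a n ^ s⁻¹ ≤ C' * a n ^ s⁻¹ :=
          le_of_eq_of_le (by rw [mul_comm, ← hsplit]) hkey
        exact le_of_mul_le_mul_right h6 hspow
      calc a n = (a n ^ (1/r)) ^ r := by
            rw [← Real.rpow_mul (ha0 n), one_div, inv_mul_cancel₀ hr0.ne', Real.rpow_one]
        _ ≤ C' ^ r := Real.rpow_le_rpow (Real.rpow_nonneg (ha0 n) _) h5 hr0.le
set_option maxHeartbeats 1600000 in
/-- Brezis–Lieb type lemma: if `uₙ ⇀ u` weakly in `L^r(Ω)` and `uₙ → u` a.e. in `Ω`,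
then `|uₙ|^p − |uₙ − u|^p − |u|^p → 0` strongly in `L^{r/p}(Ω)` for any `p ∈ [1, r]`. -/
theorem brezis_lieb_type
    {N : ℕ} (hN : 1 ≤ N) (Ω : Set (EuclideanSpace ℝ (Fin N))) (hΩ : IsOpen Ω)
    (r p : ℝ) (hr : 1 ≤ r) (hp : p ∈ Set.Icc 1 r)
    (u : ℕ → EuclideanSpace ℝ (Fin N) → ℝ) (v : EuclideanSpace ℝ (Fin N) → ℝ)
    (hu : ∀ n, MemLp (u n) (ENNReal.ofReal r) (volume.restrict Ω))
    (hv : MemLp v (ENNReal.ofReal r) (volume.restrict Ω))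
    (r' : ℝ≥0∞) (hr' : 1 / ENNReal.ofReal r + 1 / r' = 1)
    (hweak : ∀ g : EuclideanSpace ℝ (Fin N) → ℝ, MemLp g r' (volume.restrict Ω) →
      Tendsto (fun n => ∫ x in Ω, u n x * g x) atTop (nhds (∫ x in Ω, v x * g x)))
    (hae : ∀ᵐ x ∂(volume.restrict Ω), Tendsto (fun n => u n x) atTop (nhds (v x))) :
    Tendsto
      (fun n => ∫ x in Ω, |(|u n x| ^ p - |u n x - v x| ^ p - |v x| ^ p)| ^ (r / p))
      atTop (nhds 0) := by
  set μ := volume.restrict Ω with hμ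
  obtain ⟨hp1, hpr⟩ := hp
  have hr0 : (0:ℝ) < r := lt_of_lt_of_le one_pos hr
  have hp0 : (0:ℝ) < p := lt_of_lt_of_le one_pos hp1
  set q : ℝ := r / p with hqdef
  have hq1 : 1 ≤ q := (one_le_div hp0).mpr hpr
  have hq0 : (0:ℝ) < q := lt_of_lt_of_le one_pos hq1
  have hpq : p * q = r := by rw [hqdef]; field_simp
  have hrne : ENNReal.ofReal r ≠ 0 := by simp [hr0]
  -- uniform bound
  have hbdd : ∀ g : EuclideanSpace ℝ (Fin N) → ℝ, MemLp g r' μ →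
      ∃ C, ∀ n, ‖∫ x, u n x * g x ∂μ‖ ≤ C := by
    intro g hg
    have ht := (hweak g hg).norm
    obtain ⟨C, hC⟩ := ht.bddAbove_range
    exact ⟨C, fun n => hC ⟨n, rfl⟩⟩
  obtain ⟨M0, hM0⟩ := bl_sup_bound hr hr' hu hbdd
  -- integrability facts
  have hIu : ∀ n, Integrable (fun x => |u n x| ^ r) μ := by
    intro n
    have := (hu n).integrable_norm_rpow hrne ENNReal.ofReal_ne_top
    simpa [Real.norm_eq_abs, ENNReal.toReal_ofReal hr0.le] using this
  have hIv : Integrable (fun x => |v x| ^ r) μ := by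
    have := hv.integrable_norm_rpow hrne ENNReal.ofReal_ne_top
    simpa [Real.norm_eq_abs, ENNReal.toReal_ofReal hr0.le] using this
  have hIuv : ∀ n, Integrable (fun x => |u n x - v x| ^ r) μ := by
    intro n
    have := ((hu n).sub hv).integrable_norm_rpow hrne ENNReal.ofReal_ne_top
    simpa [Real.norm_eq_abs, ENNReal.toReal_ofReal hr0.le] using this
  have hM00 : 0 ≤ M0 :=
    le_trans (integral_nonneg fun x => Real.rpow_nonneg (abs_nonneg _) _) (hM0 0)
  -- uniform bound on ∫ |u n - v|^r
  set M : ℝ := 2 ^ r * (M0 + ∫ x, |v x| ^ r ∂μ) with hMdef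
  have hM : ∀ n, ∫ x, |u n x - v x| ^ r ∂μ ≤ M := by
    intro n
    have hpt : ∀ x, |u n x - v x| ^ r ≤ 2 ^ r * (|u n x| ^ r + |v x| ^ r) := by
      intro x
      calc |u n x - v x| ^ r ≤ (|u n x| + |v x|) ^ r :=
            Real.rpow_le_rpow (abs_nonneg _) (abs_sub _ _) hr0.le
        _ ≤ 2 ^ r * (|u n x| ^ r + |v x| ^ r) :=
            bl_two_rpow hr0.le (abs_nonneg _) (abs_nonneg _)
    calc ∫ x, |u n x - v x| ^ r ∂μ
        ≤ ∫ x, 2 ^ r * (|u n x| ^ r + |v x| ^ r) ∂μ :=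
          integral_mono (hIuv n) (((hIu n).add hIv).const_mul _) hpt
      _ = 2 ^ r * ((∫ x, |u n x| ^ r ∂μ) + ∫ x, |v x| ^ r ∂μ) := by
          rw [integral_const_mul, integral_add (hIu n) hIv]
      _ ≤ M := by
          rw [hMdef]
          have h2r : (0:ℝ) ≤ 2 ^ r := Real.rpow_nonneg (by norm_num) _
          exact mul_le_mul_of_nonneg_left (by linarith [hM0 n]) h2r
  have hMnn : 0 ≤ M := le_trans (integral_nonneg fun x => Real.rpow_nonneg (abs_nonneg _) _) (hM 0)
  -- measurability helpers
  have hum : ∀ n, AEMeasurable (u n) μ := fun n => (hu n).1.aemeasurable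
  have hvm : AEMeasurable v μ := hv.1.aemeasurable
  -- main convergence
  rw [Metric.tendsto_atTop]
  intro δ hδ
  -- choose ε
  have h2q : (0:ℝ) < 2 ^ q := Real.rpow_pos_of_pos (by norm_num) _
  set ε : ℝ := ((δ/2) / ((M+1) * 2 ^ q)) ^ (1/q) with hεdef
  have hεpos : 0 < ε := by
    rw [hεdef]
    apply Real.rpow_pos_of_pos
    positivity
  have hεq : 2 ^ q * ε ^ q = (δ/2) / (M+1) := by
    rw [hεdef, one_div, Real.rpow_inv_rpow (by positivity) hq0.ne']
    field_simp
  obtain ⟨C₀, hC₀pos, hC₀⟩ := bl_eps_ineq hp1 hεpos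
  set C₁ : ℝ := C₀ + 1 with hC₁def
  have hC₁pos : 0 < C₁ := by positivity
  set K1 : ℝ := 2 ^ q * ε ^ q with hK1def
  set K2 : ℝ := 2 ^ q * C₁ ^ q with hK2def
  have hK1pos : 0 < K1 := by rw [hK1def]; positivity
  have hK2pos : 0 < K2 := by rw [hK2def]; positivity
  set W : ℕ → EuclideanSpace ℝ (Fin N) → ℝ :=
    fun n x => |(|u n x| ^ p - |u n x - v x| ^ p - |v x| ^ p)| ^ q with hWdef
  -- pointwise bound on W
  have hWle : ∀ n x, W n x ≤ K1 * |u n x - v x| ^ r + K2 * |v x| ^ r := by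
    intro n x
    have h1 : abs (|u n x| ^ p - |u n x - v x| ^ p - |v x| ^ p) ≤
        ε * |u n x - v x| ^ p + C₁ * |v x| ^ p := by
      have h2 := hC₀ (u n x) (v x)
      have h3 : abs (|u n x| ^ p - |u n x - v x| ^ p - |v x| ^ p) ≤
          abs (|u n x| ^ p - |u n x - v x| ^ p) + |v x| ^ p := by
        have := abs_sub (|u n x| ^ p - |u n x - v x| ^ p) (|v x| ^ p)
        calc abs (|u n x| ^ p - |u n x - v x| ^ p - |v x| ^ p)
            ≤ abs (|u n x| ^ p - |u n x - v x| ^ p) + abs (|v x| ^ p) := abs_sub _ _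
          _ = abs (|u n x| ^ p - |u n x - v x| ^ p) + |v x| ^ p := by
              rw [abs_of_nonneg (Real.rpow_nonneg (abs_nonneg _) _)]
      rw [hC₁def]
      calc abs (|u n x| ^ p - |u n x - v x| ^ p - |v x| ^ p)
          ≤ abs (|u n x| ^ p - |u n x - v x| ^ p) + |v x| ^ p := h3
        _ ≤ ε * |u n x - v x| ^ p + C₀ * |v x| ^ p + |v x| ^ p := by linarith [h2]
        _ = ε * |u n x - v x| ^ p + (C₀ + 1) * |v x| ^ p := by ring
    have h4 : W n x ≤ (ε * |u n x - v x| ^ p + C₁ * |v x| ^ p) ^ q := by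
      rw [hWdef]
      exact Real.rpow_le_rpow (abs_nonneg _) h1 hq0.le
    have h5 : (ε * |u n x - v x| ^ p + C₁ * |v x| ^ p) ^ q ≤
        2 ^ q * ((ε * |u n x - v x| ^ p) ^ q + (C₁ * |v x| ^ p) ^ q) :=
      bl_two_rpow hq0.le (by positivity) (by positivity)
    have h6 : (ε * |u n x - v x| ^ p) ^ q = ε ^ q * |u n x - v x| ^ r := by
      rw [Real.mul_rpow hεpos.le (Real.rpow_nonneg (abs_nonneg _) _),
        ← Real.rpow_mul (abs_nonneg _), hpq]
    have h7 : (C₁ * |v x| ^ p) ^ q = C₁ ^ q * |v x| ^ r := by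
      rw [Real.mul_rpow hC₁pos.le (Real.rpow_nonneg (abs_nonneg _) _),
        ← Real.rpow_mul (abs_nonneg _), hpq]
    calc W n x ≤ 2 ^ q * (ε ^ q * |u n x - v x| ^ r + C₁ ^ q * |v x| ^ r) := by
          rw [← h6, ← h7]; exact h4.trans h5
      _ = K1 * |u n x - v x| ^ r + K2 * |v x| ^ r := by rw [hK1def, hK2def]; ring
  have hW0 : ∀ n x, 0 ≤ W n x := fun n x => Real.rpow_nonneg (abs_nonneg _) _
  -- the auxiliary sequence
  set h : ℕ → EuclideanSpace ℝ (Fin N) → ℝ :=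
    fun n x => max (W n x - K1 * |u n x - v x| ^ r) 0 with hhdef
  have hh0 : ∀ n x, 0 ≤ h n x := fun n x => le_max_right _ _
  have hhle : ∀ n x, h n x ≤ K2 * |v x| ^ r := by
    intro n x
    rw [hhdef]
    refine max_le (by linarith [hWle n x]) (by positivity)
  have hWm : ∀ n, AEStronglyMeasurable (W n) μ := by
    intro n
    have h1 := hum n
    have h2 := hvm
    apply AEMeasurable.aestronglyMeasurable
    fun_prop
  have hhm : ∀ n, AEStronglyMeasurable (h n) μ := by
    intro n
    have h1 := hum n
    have h2 := hvm
    apply AEMeasurable.aestronglyMeasurable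
    fun_prop
  have hhint : ∀ n, Integrable (h n) μ := by
    intro n
    refine Integrable.mono (hIv.const_mul K2) (hhm n) ?_
    refine Eventually.of_forall fun x => ?_
    simp only [Real.norm_eq_abs]
    rw [abs_of_nonneg (hh0 n x),
      abs_of_nonneg (by positivity : (0:ℝ) ≤ K2 * |v x| ^ r)]
    exact hhle n x
  -- a.e. convergence of h to 0
  have hhlim : ∀ᵐ x ∂μ, Tendsto (fun n => h n x) atTop (nhds 0) := by
    filter_upwards [hae] with x hx
    have habs : Tendsto (fun n => |u n x|) atTop (nhds |v x|) :=
      (continuous_abs.tendsto _).comp hx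
    have hsub : Tendsto (fun n => u n x - v x) atTop (nhds 0) := by
      have := hx.sub (tendsto_const_nhds (x := v x))
      simpa using this
    have habs2 : Tendsto (fun n => |u n x - v x|) atTop (nhds 0) := by
      have := (continuous_abs.tendsto _).comp hsub
      simpa [Function.comp_def] using this
    have hP1 : Tendsto (fun n => |u n x| ^ p) atTop (nhds (|v x| ^ p)) :=
      (Real.continuousAt_rpow_const _ p (Or.inr hp0.le)).tendsto.comp habs
    have hP2 : Tendsto (fun n => |u n x - v x| ^ p) atTop (nhds 0) := by
      have := (Real.continuousAt_rpow_const 0 p (Or.inr hp0.le)).tendsto.comp habs2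
      simpa [Function.comp_def, Real.zero_rpow hp0.ne'] using this
    have hPr : Tendsto (fun n => |u n x - v x| ^ r) atTop (nhds 0) := by
      have := (Real.continuousAt_rpow_const 0 r (Or.inr hr0.le)).tendsto.comp habs2
      simpa [Function.comp_def, Real.zero_rpow hr0.ne'] using this
    have hinner : Tendsto (fun n => |u n x| ^ p - |u n x - v x| ^ p - |v x| ^ p)
        atTop (nhds 0) := by
      have := (hP1.sub hP2).sub (tendsto_const_nhds (x := |v x| ^ p))
      simpa using this
    have hWlim : Tendsto (fun n => W n x) atTop (nhds 0) := by
      have h1 : Tendsto (fun n => abs (|u n x| ^ p - |u n x - v x| ^ p - |v x| ^ p))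
          atTop (nhds 0) := by
        have := (continuous_abs.tendsto (0:ℝ)).comp hinner
        simpa [Function.comp_def] using this
      have := (Real.continuousAt_rpow_const 0 q (Or.inr hq0.le)).tendsto.comp h1
      simpa [Function.comp_def, hWdef, Real.zero_rpow hq0.ne'] using this
    have := (hWlim.sub (hPr.const_mul K1)).max (tendsto_const_nhds (x := (0:ℝ)))
    simpa [hhdef] using this
  -- DCT
  have hDCT : Tendsto (fun n => ∫ x, h n x ∂μ) atTop (nhds 0) := by
    have := tendsto_integral_of_dominated_convergence (fun x => K2 * |v x| ^ r)
      hhm (hIv.const_mul K2)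
      (fun n => Eventually.of_forall fun x => by
        rw [Real.norm_eq_abs, abs_of_nonneg (hh0 n x)]; exact hhle n x)
      hhlim
    simpa using this
  have hev : ∀ᶠ n in atTop, (∫ x, h n x ∂μ) < δ / 2 :=
    hDCT.eventually_lt_const (half_pos hδ)
  obtain ⟨n₀, hn₀⟩ := eventually_atTop.mp hev
  refine ⟨n₀, fun n hn => ?_⟩
  have hWint : Integrable (W n) μ := by
    refine Integrable.mono (((hIuv n).const_mul K1).add (hIv.const_mul K2)) (hWm n) ?_
    refine Eventually.of_forall fun x => ?_
    simp only [Real.norm_eq_abs, Pi.add_apply]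
    rw [abs_of_nonneg (hW0 n x),
      abs_of_nonneg (by positivity : (0:ℝ) ≤ K1 * |u n x - v x| ^ r + K2 * |v x| ^ r)]
    exact hWle n x
  have hWh : ∀ x, W n x ≤ h n x + K1 * |u n x - v x| ^ r := by
    intro x
    have h0 : W n x - K1 * |u n x - v x| ^ r ≤ h n x := le_max_left _ _
    linarith
  have hbound : ∫ x, W n x ∂μ ≤ (∫ x, h n x ∂μ) + K1 * ∫ x, |u n x - v x| ^ r ∂μ := by
    calc ∫ x, W n x ∂μ ≤ ∫ x, (h n x + K1 * |u n x - v x| ^ r) ∂μ :=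
          integral_mono hWint ((hhint n).add ((hIuv n).const_mul K1)) hWh
      _ = (∫ x, h n x ∂μ) + K1 * ∫ x, |u n x - v x| ^ r ∂μ := by
          rw [integral_add (hhint n) ((hIuv n).const_mul K1), integral_const_mul]
  have h8 : K1 * ∫ x, |u n x - v x| ^ r ∂μ ≤ δ / 2 := by
    have h9 : K1 * ∫ x, |u n x - v x| ^ r ∂μ ≤ K1 * M :=
      mul_le_mul_of_nonneg_left (hM n) hK1pos.le
    have h10 : K1 * M ≤ δ / 2 := by
      rw [hεq, div_mul_eq_mul_div, div_le_iff₀ (by positivity : (0:ℝ) < M + 1)]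
      nlinarith
    linarith
  have hgoal : dist (∫ x, W n x ∂μ) 0 < δ := by
    rw [Real.dist_eq, sub_zero, abs_of_nonneg (integral_nonneg fun x => hW0 n x)]
    calc ∫ x, W n x ∂μ ≤ (∫ x, h n x ∂μ) + K1 * ∫ x, |u n x - v x| ^ r ∂μ := hbound
      _ < δ / 2 + δ / 2 := by
          have := hn₀ n hn
          linarith
      _ = δ := by ring
  exact hgoal
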